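/- Let ψ_h = ψ + hπ/λ for an integer h. Then I_λ evaluated at (r, ψ_h, p_r, p_ψ) equals (−1)^h times I_λ evaluated at (r, ψ, p_r, p_ψ); i.e., the first integral I_λ transforms by the sign (−1)^h under the discrete rotation ψ ↦ ψ + hπ/λ. -/

import Mathlib

open Real

/- Phase space coordinates: `x 0 = r`, `x 1 = ψ`, `x 2 = p_r`, `x 3 = p_ψ`. -/

/-- Partial derivative with respect to the `i`-th coordinate. -/
noncomputable def pd (i : Fin 4) (f : (Fin 4 → ℝ) → ℝ) (x : Fin 4 → ℝ) : ℝ :=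
  deriv (fun t => f (Function.update x i t)) (x i)

/-- The angular Hamiltonian `L = ½ p_ψ² + F(ψ)`. -/
noncomputable def Lfun (F : ℝ → ℝ) (x : Fin 4 → ℝ) : ℝ :=
  (1/2) * (x 3)^2 + F (x 1)

/-- The Hamiltonian vector field `X_L = p_ψ ∂/∂ψ − F'(ψ) ∂/∂p_ψ` as an operator. -/
noncomputable def XL (F : ℝ → ℝ) (f : (Fin 4 → ℝ) → ℝ) (x : Fin 4 → ℝ) : ℝ :=
  x 3 * pd 1 f x - deriv F (x 1) * pd 3 f x

/-- The Hamiltonian `H = ½ p_r² + (½ p_ψ² + F(ψ))/r²`. -/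
noncomputable def Hfun (F : ℝ → ℝ) (x : Fin 4 → ℝ) : ℝ :=
  (1/2) * (x 2)^2 + (1 / (x 0)^2) * ((1/2) * (x 3)^2 + F (x 1))

/-- The operator `U = p_r + (μ/r) X_L` (multiplication by `p_r` plus `(μ/r)·X_L`). -/
noncomputable def Uop (μ : ℝ) (F : ℝ → ℝ) (f : (Fin 4 → ℝ) → ℝ) (x : Fin 4 → ℝ) : ℝ :=
  x 2 * f x + (μ / x 0) * XL F f x

section aux

variable {c s : ℝ} {F : ℝ → ℝ}

lemma pd1_shift (f : (Fin 4 → ℝ) → ℝ)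
    (hf : ∀ y : Fin 4 → ℝ, f (Function.update y 1 (y 1 + c)) = s * f y)
    (x : Fin 4 → ℝ) :
    pd 1 f (Function.update x 1 (x 1 + c)) = s * pd 1 f x := by
  unfold pd
  simp only [Function.update_self, Function.update_idem]
  have key : ∀ t : ℝ, f (Function.update x 1 (t + c)) = s * f (Function.update x 1 t) := by
    intro t
    have := hf (Function.update x 1 t)
    simpa using this
  calc deriv (fun t => f (Function.update x 1 t)) (x 1 + c)
      = deriv (fun t => f (Function.update x 1 (t + c))) (x 1) :=
        (deriv_comp_add_const (fun t => f (Function.update x 1 t)) c (x 1)).symm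
    _ = deriv (fun t => s * f (Function.update x 1 t)) (x 1) := by
        congr 1; funext t; exact key t
    _ = s * deriv (fun t => f (Function.update x 1 t)) (x 1) := by
        rw [deriv_const_mul_field]

lemma pd3_shift (f : (Fin 4 → ℝ) → ℝ)
    (hf : ∀ y : Fin 4 → ℝ, f (Function.update y 1 (y 1 + c)) = s * f y)
    (x : Fin 4 → ℝ) :
    pd 3 f (Function.update x 1 (x 1 + c)) = s * pd 3 f x := by
  unfold pd
  have h13 : (1 : Fin 4) ≠ 3 := by decide
  have key : ∀ t : ℝ,
      f (Function.update (Function.update x 1 (x 1 + c)) 3 t)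
        = s * f (Function.update x 3 t) := by
    intro t
    rw [Function.update_comm h13]
    have := hf (Function.update x 3 t)
    simpa [Function.update_of_ne h13.symm] using this
  have hx3 : Function.update x 1 (x 1 + c) 3 = x 3 := by
    simp [Function.update_of_ne]
  rw [hx3]
  calc deriv (fun t => f (Function.update (Function.update x 1 (x 1 + c)) 3 t)) (x 3)
      = deriv (fun t => s * f (Function.update x 3 t)) (x 3) := by
        congr 1; funext t; exact key t
    _ = s * deriv (fun t => f (Function.update x 3 t)) (x 3) := by
        rw [deriv_const_mul_field]

lemma Uop_shift (μ : ℝ) (hF : ∀ t : ℝ, F (t + c) = F t)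
    (f : (Fin 4 → ℝ) → ℝ)
    (hf : ∀ y : Fin 4 → ℝ, f (Function.update y 1 (y 1 + c)) = s * f y)
    (y : Fin 4 → ℝ) :
    Uop μ F f (Function.update y 1 (y 1 + c)) = s * Uop μ F f y := by
  have hF' : deriv F (y 1 + c) = deriv F (y 1) := by
    have : (fun t => F (t + c)) = F := funext hF
    calc deriv F (y 1 + c) = deriv (fun t => F (t + c)) (y 1) := (deriv_comp_add_const F c (y 1)).symm
      _ = deriv F (y 1) := by rw [this]
  unfold Uop XL
  have h10 : Function.update y 1 (y 1 + c) 0 = y 0 := by simp [Function.update_of_ne]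
  have h12 : Function.update y 1 (y 1 + c) 2 = y 2 := by simp [Function.update_of_ne]
  have h13 : Function.update y 1 (y 1 + c) 3 = y 3 := by simp [Function.update_of_ne]
  have h11 : Function.update y 1 (y 1 + c) 1 = y 1 + c := by simp
  rw [h10, h12, h13, h11, hF', pd1_shift f hf, pd3_shift f hf, hf]
  ring

end aux

/-- Under the discrete rotation `ψ ↦ ψ + hπ/λ`, the first integral
`I_λ = (p_r + (1/(λr))X_L)^λ cos(λψ)` (with `F(ψ) = k/sin²(λψ)`) transforms by the
sign `(−1)^h`. -/
theorem dihedral_symmetry_of_integral (lam : ℕ) (hlam : 0 < lam) (k : ℝ) (h : ℤ)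
    (x : Fin 4 → ℝ) (hr : 0 < x 0) (hs : sin (lam * x 1) ≠ 0) :
    ((Uop (1 / lam) (fun ψ => k / (sin (lam * ψ))^2))^[lam]
        (fun y => cos (lam * y 1)))
      (Function.update x 1 (x 1 + h * π / lam))
    = (-1 : ℝ)^h *
      ((Uop (1 / lam) (fun ψ => k / (sin (lam * ψ))^2))^[lam]
        (fun y => cos (lam * y 1))) x := by
  set c : ℝ := h * π / lam with hc
  set s : ℝ := (-1 : ℝ)^h with hss
  have hlam0 : (lam : ℝ) ≠ 0 := Nat.cast_ne_zero.mpr hlam.ne'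
  have hmul : ∀ t : ℝ, (lam : ℝ) * (t + c) = lam * t + h * π := by
    intro t; rw [hc, mul_add, mul_div_assoc', mul_comm (lam:ℝ) (h*π), mul_div_assoc, div_self hlam0, mul_one]
  have hF : ∀ t : ℝ, k / (sin (lam * (t + c)))^2 = k / (sin (lam * t))^2 := by
    intro t
    rw [hmul, sin_add_int_mul_pi]
    congr 1
    rw [mul_pow, ← zpow_natCast ((-1:ℝ)^h) 2, ← zpow_mul]
    have : h * (2:ℕ) = 2 * h := by ring
    rw [this, zpow_mul]
    norm_num
  have key : ∀ n : ℕ, ∀ y : Fin 4 → ℝ,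
      ((Uop (1 / lam) (fun ψ => k / (sin (lam * ψ))^2))^[n]
        (fun y => cos (lam * y 1))) (Function.update y 1 (y 1 + c))
      = s * ((Uop (1 / lam) (fun ψ => k / (sin (lam * ψ))^2))^[n]
        (fun y => cos (lam * y 1))) y := by
    intro n
    induction n with
    | zero =>
      intro y
      simp only [Function.iterate_zero, id_eq, Function.update_self]
      rw [hmul, cos_add_int_mul_pi]
    | succ m ih =>
      intro y
      rw [Function.iterate_succ_apply']
      exact Uop_shift (1 / lam) hF _ ih y
  exact key lam x
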